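/- If y₁, y₂ : ℝ → ℝ are twice differentiable on (−1,1), solve the Legendre differential equation of degree ν on (−1,1), and satisfy the normalization (1 − x²)·(y₁'(x)·y₂(x) − y₁(x)·y₂'(x)) = 1 for all x ∈ (−1,1), then the transformed functions u₁(θ) = √(sin θ)·y₁(cos θ) and u₂(θ) = √(sin θ)·y₂(cos θ) satisfy the Wronskian identity u₁(θ)·u₂'(θ) − u₁'(θ)·u₂(θ) = 1 for all θ ∈ (0,π). -/

import Mathlib

/-- The transformed functions u₁(θ) = √(sin θ)·y₁(cos θ), u₂(θ) = √(sin θ)·y₂(cos θ)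
    satisfy u₁ u₂' − u₁' u₂ = 1 on (0,π). -/
theorem stmt_11 (ν : ℝ) (y₁ y₁d y₁dd y₂ y₂d y₂dd : ℝ → ℝ)
    (hy₁d : ∀ x ∈ Set.Ioo (-1 : ℝ) 1, HasDerivAt y₁ (y₁d x) x)
    (hy₁dd : ∀ x ∈ Set.Ioo (-1 : ℝ) 1, HasDerivAt y₁d (y₁dd x) x)
    (hy₂d : ∀ x ∈ Set.Ioo (-1 : ℝ) 1, HasDerivAt y₂ (y₂d x) x)
    (hy₂dd : ∀ x ∈ Set.Ioo (-1 : ℝ) 1, HasDerivAt y₂d (y₂dd x) x)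
    (hode₁ : ∀ x ∈ Set.Ioo (-1 : ℝ) 1,
      (1 - x ^ 2) * y₁dd x - 2 * x * y₁d x + ν * (ν + 1) * y₁ x = 0)
    (hode₂ : ∀ x ∈ Set.Ioo (-1 : ℝ) 1,
      (1 - x ^ 2) * y₂dd x - 2 * x * y₂d x + ν * (ν + 1) * y₂ x = 0)
    (hW : ∀ x ∈ Set.Ioo (-1 : ℝ) 1,
      (1 - x ^ 2) * (y₁d x * y₂ x - y₁ x * y₂d x) = 1) :
    ∀ θ ∈ Set.Ioo 0 Real.pi,
      (Real.sqrt (Real.sin θ) * y₁ (Real.cos θ))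
          * deriv (fun t => Real.sqrt (Real.sin t) * y₂ (Real.cos t)) θ
        - deriv (fun t => Real.sqrt (Real.sin t) * y₁ (Real.cos t)) θ
          * (Real.sqrt (Real.sin θ) * y₂ (Real.cos θ)) = 1 := by
  intro θ hθ
  have hs : 0 < Real.sin θ := Real.sin_pos_of_pos_of_lt_pi hθ.1 hθ.2
  have hc2 : Real.cos θ ^ 2 < 1 := by nlinarith [Real.sin_sq_add_cos_sq θ]
  have hc : Real.cos θ ∈ Set.Ioo (-1 : ℝ) 1 := by constructor <;> nlinarith
  have hsqrt : 0 < Real.sqrt (Real.sin θ) := Real.sqrt_pos.mpr hs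
  have hsq : Real.sqrt (Real.sin θ) ^ 2 = Real.sin θ := Real.sq_sqrt hs.le
  have hS : HasDerivAt (fun t => Real.sqrt (Real.sin t))
      (1 / (2 * Real.sqrt (Real.sin θ)) * Real.cos θ) θ :=
    (Real.hasDerivAt_sqrt hs.ne').comp θ (Real.hasDerivAt_sin θ)
  have h1 : HasDerivAt (fun t => y₁ (Real.cos t)) (y₁d (Real.cos θ) * -Real.sin θ) θ :=
    (hy₁d _ hc).comp θ (Real.hasDerivAt_cos θ)
  have h2 : HasDerivAt (fun t => y₂ (Real.cos t)) (y₂d (Real.cos θ) * -Real.sin θ) θ :=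
    (hy₂d _ hc).comp θ (Real.hasDerivAt_cos θ)
  have hu1 : deriv (fun t => Real.sqrt (Real.sin t) * y₁ (Real.cos t)) θ = _ :=
    (hS.mul h1).deriv
  have hu2 : deriv (fun t => Real.sqrt (Real.sin t) * y₂ (Real.cos t)) θ = _ :=
    (hS.mul h2).deriv
  rw [hu1, hu2]
  have hw := hW _ hc
  have hsin2 : Real.sin θ ^ 2 = 1 - Real.cos θ ^ 2 := by
    nlinarith [Real.sin_sq_add_cos_sq θ]
  field_simp
  linear_combination (2 * Real.sin θ *
      (y₁d (Real.cos θ) * y₂ (Real.cos θ) - y₁ (Real.cos θ) * y₂d (Real.cos θ))) * hsq +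
    (2 *
      (y₁d (Real.cos θ) * y₂ (Real.cos θ) - y₁ (Real.cos θ) * y₂d (Real.cos θ))) * hsin2 +
    2 * hw
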